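/- Let (φ^k)_{k≥0} be a sequence of real polynomials with deg φ^k = k that is orthogonal on [−1,1]. Let p ≥ 0, |q| ≤ p, m ≥ 0 and k = (k1,k2,k3). If 2m < k1 + k2 + k3 − p, then I_m(p,q,k) = ∫_{[−1,1]³} T_{p,m}^q(x1,x2,x3) φ^{k1}(x1) φ^{k2}(x2) φ^{k3}(x3) dx = 0. -/

import Mathlib

open intervalIntegral Finset


lemma monomial_orth (φ : ℕ → Polynomial ℝ)
    (hdeg : ∀ k : ℕ, (φ k).degree = k)
    (horth : ∀ j k : ℕ, j ≠ k →
      ∫ ζ in (-1:ℝ)..1, (φ j).eval ζ * (φ k).eval ζ = 0) :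
    ∀ n k : ℕ, n < k → ∫ ζ in (-1:ℝ)..1, ζ ^ n * (φ k).eval ζ = 0 := by
  intro n
  induction n using Nat.strong_induction_on with
  | _ n IH =>
    intro k hk
    have hφn0 : φ n ≠ 0 := fun h => by simpa [h] using hdeg n
    set c := (φ n).leadingCoeff with hcdef
    have hc : c ≠ 0 := Polynomial.leadingCoeff_ne_zero.mpr hφn0
    set R := φ n - Polynomial.monomial n c with hRdef
    have hRdeg : R.degree < (n : WithBot ℕ) := by
      have := Polynomial.degree_sub_lt (p := φ n) (q := Polynomial.monomial n c)
        (by rw [hdeg n, Polynomial.degree_monomial n hc]) hφn0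
        (by rw [Polynomial.leadingCoeff_monomial])
      rwa [hdeg n] at this
    have key : ∀ ζ : ℝ, ζ ^ n * (φ k).eval ζ =
        c⁻¹ * ((φ n).eval ζ * (φ k).eval ζ) - c⁻¹ * (R.eval ζ * (φ k).eval ζ) := by
      intro ζ
      have hR : R.eval ζ = (φ n).eval ζ - c * ζ ^ n := by
        simp [hRdef, Polynomial.eval_monomial]
      rw [hR]; field_simp; ring
    have hint1 : IntervalIntegrable (fun ζ => c⁻¹ * ((φ n).eval ζ * (φ k).eval ζ))
        MeasureTheory.volume (-1) 1 :=
      (continuous_const.mul ((Polynomial.continuous _).mul (Polynomial.continuous _))).intervalIntegrable _ _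
    have hint2 : IntervalIntegrable (fun ζ => c⁻¹ * (R.eval ζ * (φ k).eval ζ))
        MeasureTheory.volume (-1) 1 :=
      (continuous_const.mul ((Polynomial.continuous _).mul (Polynomial.continuous _))).intervalIntegrable _ _
    have hRint : (∫ ζ in (-1:ℝ)..1, R.eval ζ * (φ k).eval ζ) = 0 := by
      by_cases hR0 : R = 0
      · simp [hR0]
      · have hnd : R.natDegree < n := (Polynomial.natDegree_lt_iff_degree_lt hR0).mpr hRdeg
        simp only [Polynomial.eval_eq_sum_range' hnd, Finset.sum_mul]
        rw [intervalIntegral.integral_finset_sum (f := fun i ζ => R.coeff i * ζ ^ i * Polynomial.eval ζ (φ k)) (fun i _ =>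
          ((continuous_const.mul (continuous_pow i)).mul (Polynomial.continuous _)).intervalIntegrable _ _)]
        refine Finset.sum_eq_zero fun i hi => ?_
        have hi' : i < n := Finset.mem_range.mp hi
        simp only [mul_assoc]
        rw [intervalIntegral.integral_const_mul]
        rw [IH i hi' k (hi'.trans hk), mul_zero]
    simp only [key]
    rw [intervalIntegral.integral_sub hint1 hint2, intervalIntegral.integral_const_mul,
      intervalIntegral.integral_const_mul, horth n k (Nat.ne_of_lt hk), hRint]
    ring

/-- `f` is a sum of monomials of total degree at most `D`. -/
def MRep (D : ℕ) (f : ℝ → ℝ → ℝ → ℂ) : Prop :=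
  ∃ n : ℕ, ∃ A B C : ℕ → ℕ, ∃ c : ℕ → ℂ,
    (∀ i < n, A i + B i + C i ≤ D) ∧
    ∀ x y z : ℝ, f x y z =
      ∑ i ∈ Finset.range n, c i * (x:ℂ) ^ A i * (y:ℂ) ^ B i * (z:ℂ) ^ C i

lemma MRep.congr {D : ℕ} {f g : ℝ → ℝ → ℝ → ℂ} (h : MRep D f)
    (hfg : ∀ x y z, f x y z = g x y z) : MRep D g := by
  obtain ⟨n, A, B, C, c, hb, hf⟩ := h
  exact ⟨n, A, B, C, c, hb, fun x y z => by rw [← hfg, hf]⟩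

lemma MRep.mono {D E : ℕ} {f : ℝ → ℝ → ℝ → ℂ} (h : MRep D f) (hDE : D ≤ E) : MRep E f := by
  obtain ⟨n, A, B, C, c, hb, hf⟩ := h
  exact ⟨n, A, B, C, c, fun i hi => le_trans (hb i hi) hDE, hf⟩

lemma rep_zero {D : ℕ} : MRep D (fun _ _ _ => 0) :=
  ⟨0, fun _ => 0, fun _ => 0, fun _ => 0, fun _ => 0, by simp, by simp⟩

lemma rep_const {D : ℕ} (a : ℂ) : MRep D (fun _ _ _ => a) :=
  ⟨1, fun _ => 0, fun _ => 0, fun _ => 0, fun _ => a, by simp, by simp⟩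

lemma rep_add {D : ℕ} {f g : ℝ → ℝ → ℝ → ℂ} (hf : MRep D f) (hg : MRep D g) :
    MRep D (fun x y z => f x y z + g x y z) := by
  obtain ⟨n₁, A₁, B₁, C₁, c₁, hb₁, hf⟩ := hf
  obtain ⟨n₂, A₂, B₂, C₂, c₂, hb₂, hg⟩ := hg
  refine ⟨n₁ + n₂, fun i => if i < n₁ then A₁ i else A₂ (i - n₁),
    fun i => if i < n₁ then B₁ i else B₂ (i - n₁),
    fun i => if i < n₁ then C₁ i else C₂ (i - n₁),
    fun i => if i < n₁ then c₁ i else c₂ (i - n₁), ?_, ?_⟩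
  · intro i hi
    by_cases h : i < n₁
    · simpa [h] using hb₁ i h
    · simpa [h] using hb₂ (i - n₁) (by omega)
  · intro x y z
    beta_reduce
    rw [Finset.sum_range_add, hf, hg]
    congr 1
    · exact Finset.sum_congr rfl fun i hi => by simp [Finset.mem_range.mp hi]
    · exact Finset.sum_congr rfl fun i hi => by
        simp [show ¬ (n₁ + i < n₁) by omega]
  
lemma rep_smul {D : ℕ} {f : ℝ → ℝ → ℝ → ℂ} (a : ℂ) (h : MRep D f) :
    MRep D (fun x y z => a * f x y z) := by
  obtain ⟨n, A, B, C, c, hb, hf⟩ := h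
  refine ⟨n, A, B, C, fun i => a * c i, hb, fun x y z => ?_⟩
  beta_reduce
  rw [hf, Finset.mul_sum]
  exact Finset.sum_congr rfl fun i _ => by ring

lemma rep_monomial {D : ℕ} {a b c' : ℕ} (h : a + b + c' ≤ D) :
    MRep D (fun x y z : ℝ => (x:ℂ) ^ a * (y:ℂ) ^ b * (z:ℂ) ^ c') :=
  ⟨1, fun _ => a, fun _ => b, fun _ => c', fun _ => 1, by simpa, by simp⟩

lemma rep_sum {D : ℕ} {ι : Type*} (s : Finset ι) (f : ι → ℝ → ℝ → ℝ → ℂ)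
    (h : ∀ i ∈ s, MRep D (f i)) :
    MRep D (fun x y z => ∑ i ∈ s, f i x y z) := by
  induction s using Finset.cons_induction with
  | empty => simpa using (rep_zero (D := D))
  | cons a s ha ih =>
    simp only [Finset.sum_cons]
    exact rep_add (h a (Finset.mem_cons_self a s))
      (ih fun i hi => h i (Finset.mem_cons_of_mem hi))

lemma rep_mul_monomial {D : ℕ} {f : ℝ → ℝ → ℝ → ℂ} (h : MRep D f) (a b c' : ℕ) :
    MRep (D + (a + b + c'))
      (fun x y z => f x y z * ((x:ℂ) ^ a * (y:ℂ) ^ b * (z:ℂ) ^ c')) := by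
  obtain ⟨n, A, B, C, c, hb, hf⟩ := h
  refine ⟨n, fun i => A i + a, fun i => B i + b, fun i => C i + c', c,
    fun i hi => by have := hb i hi; beta_reduce; omega, fun x y z => ?_⟩
  beta_reduce
  rw [hf, Finset.sum_mul]
  exact Finset.sum_congr rfl fun i _ => by simp [pow_add]; ring

lemma rep_mul {D E : ℕ} {f g : ℝ → ℝ → ℝ → ℂ} (hf : MRep D f) (hg : MRep E g) :
    MRep (D + E) (fun x y z => f x y z * g x y z) := by
  obtain ⟨n, A, B, C, c, hb, hgeq⟩ := hg
  have key : ∀ x y z : ℝ, f x y z * g x y z =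
      ∑ i ∈ Finset.range n, c i * (f x y z * ((x:ℂ) ^ A i * (y:ℂ) ^ B i * (z:ℂ) ^ C i)) := by
    intro x y z
    rw [hgeq, Finset.mul_sum]
    exact Finset.sum_congr rfl fun i _ => by ring
  refine MRep.congr (rep_sum (Finset.range n) _ fun i hi => ?_) fun x y z => (key x y z).symm
  exact rep_smul (c i) ((rep_mul_monomial hf (A i) (B i) (C i)).mono
    (by have := hb i (Finset.mem_range.mp hi); omega))

lemma rep_pow {D : ℕ} {f : ℝ → ℝ → ℝ → ℂ} (hf : MRep D f) (k : ℕ) :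
    MRep (k * D) (fun x y z => f x y z ^ k) := by
  induction k with
  | zero => exact (rep_const 1).congr fun x y z => by simp
  | succ k ih =>
    have h := (rep_mul ih hf).congr (g := fun x y z => f x y z ^ (k+1))
      (fun x y z => (pow_succ _ _).symm)
    rwa [show k * D + D = (k+1) * D by ring] at h
/-- The Cartesian polynomial `T_{p,m}^q(x,y,z)`, the complex conjugate of
`R_{p,m}^q(x) = ‖x‖^{2m+p} Y_p^q(x/‖x‖) / C_Y(p,q)` (a regular solid harmonic
weighted by `‖x‖^{2m}`). Here `s = 1` if `q ≥ 0` and `s = -1` if `q < 0`. -/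
noncomputable def solidT (p m : ℕ) (q : ℤ) (x y z : ℝ) : ℂ :=
  ((-1 : ℂ) ^ q.natAbs / 2 ^ p) *
    ((x : ℂ) - (if 0 ≤ q then (1 : ℂ) else -1) * Complex.I * (y : ℂ)) ^ q.natAbs *
    ∑ ν ∈ Finset.range ((p - q.natAbs) / 2 + 1),
      ((-1 : ℂ) ^ ν * (Nat.factorial (2 * p - 2 * ν) : ℂ) /
          ((Nat.factorial ν : ℂ) * (Nat.factorial (p - ν) : ℂ) *
            (Nat.factorial (p - q.natAbs - 2 * ν) : ℂ))) *
        (((x ^ 2 + y ^ 2 + z ^ 2 : ℝ) : ℂ)) ^ (m + ν) * (z : ℂ) ^ (p - q.natAbs - 2 * ν)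

lemma rep_Q : MRep 2 (fun x y z : ℝ => ((x ^ 2 + y ^ 2 + z ^ 2 : ℝ) : ℂ)) := by
  have h : MRep 2 (fun x y z : ℝ =>
      (x:ℂ)^2 * (y:ℂ)^0 * (z:ℂ)^0 + ((x:ℂ)^0 * (y:ℂ)^2 * (z:ℂ)^0 + (x:ℂ)^0 * (y:ℂ)^0 * (z:ℂ)^2)) :=
    rep_add (rep_monomial (by omega)) (rep_add (rep_monomial (by omega)) (rep_monomial (by omega)))
  exact h.congr fun x y z => by push_cast; ring

lemma rep_L (w : ℂ) : MRep 1 (fun x y z : ℝ => (x:ℂ) - w * (y:ℂ)) := by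
  have h : MRep 1 (fun x y z : ℝ =>
      (x:ℂ)^1 * (y:ℂ)^0 * (z:ℂ)^0 + (-w) * ((x:ℂ)^0 * (y:ℂ)^1 * (z:ℂ)^0)) :=
    rep_add (rep_monomial (by omega)) (rep_smul _ (rep_monomial (by omega)))
  exact h.congr fun x y z => by ring

lemma rep_solidT (p m : ℕ) (q : ℤ) (hq : q.natAbs ≤ p) :
    MRep (2 * m + p) (fun x y z => solidT p m q x y z) := by
  set w : ℂ := (if 0 ≤ q then (1 : ℂ) else -1) * Complex.I with hw
  have hL : MRep q.natAbs (fun x y z : ℝ => ((x:ℂ) - w * y) ^ q.natAbs) := by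
    have h := rep_pow (rep_L w) q.natAbs
    rwa [mul_one] at h
  have hS : MRep (2 * m + (p - q.natAbs)) (fun x y z : ℝ =>
      ∑ ν ∈ Finset.range ((p - q.natAbs) / 2 + 1),
        ((-1 : ℂ) ^ ν * (Nat.factorial (2 * p - 2 * ν) : ℂ) /
            ((Nat.factorial ν : ℂ) * (Nat.factorial (p - ν) : ℂ) *
              (Nat.factorial (p - q.natAbs - 2 * ν) : ℂ))) *
          (((x ^ 2 + y ^ 2 + z ^ 2 : ℝ) : ℂ)) ^ (m + ν) * (z : ℂ) ^ (p - q.natAbs - 2 * ν)) := by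
    apply rep_sum
    intro ν hν
    have hν' : ν ≤ (p - q.natAbs) / 2 := by
      have := Finset.mem_range.mp hν; omega
    have h1 : MRep ((m + ν) * 2) (fun x y z : ℝ => (((x ^ 2 + y ^ 2 + z ^ 2 : ℝ) : ℂ)) ^ (m + ν)) :=
      rep_pow rep_Q (m + ν)
    have h2 := rep_mul h1 (rep_monomial (a := 0) (b := 0) (c' := p - q.natAbs - 2 * ν) (le_refl _))
    refine ((rep_smul ((-1 : ℂ) ^ ν * (Nat.factorial (2 * p - 2 * ν) : ℂ) /
            ((Nat.factorial ν : ℂ) * (Nat.factorial (p - ν) : ℂ) *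
              (Nat.factorial (p - q.natAbs - 2 * ν) : ℂ))) h2).mono ?_).congr ?_
    · omega
    · intro x y z; simp only [pow_zero, one_mul, mul_one]; ring
  have h := rep_smul ((-1 : ℂ) ^ q.natAbs / 2 ^ p) (rep_mul hL hS)
  refine (h.mono (by omega)).congr ?_
  intro x y z
  simp only [solidT, ← hw]
  ring
lemma triple_int (n : ℕ) (g h l : ℕ → ℝ → ℂ)
    (hg : ∀ i, Continuous (g i)) (hh : ∀ i, Continuous (h i)) (hl : ∀ i, Continuous (l i)) :
    (∫ x₁ in (-1:ℝ)..1, ∫ x₂ in (-1:ℝ)..1, ∫ x₃ in (-1:ℝ)..1,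
        ∑ i ∈ Finset.range n, g i x₁ * h i x₂ * l i x₃)
      = ∑ i ∈ Finset.range n,
          (∫ x in (-1:ℝ)..1, g i x) * (∫ x in (-1:ℝ)..1, h i x) * (∫ x in (-1:ℝ)..1, l i x) := by
  have h3 : ∀ x₁ x₂ : ℝ, (∫ x₃ in (-1:ℝ)..1, ∑ i ∈ Finset.range n, g i x₁ * h i x₂ * l i x₃)
      = ∑ i ∈ Finset.range n, g i x₁ * h i x₂ * (∫ x in (-1:ℝ)..1, l i x) := by
    intro x₁ x₂
    rw [intervalIntegral.integral_finset_sum (f := fun i x₃ => g i x₁ * h i x₂ * l i x₃) (fun i _ =>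
      (continuous_const.mul (hl i)).intervalIntegrable _ _)]
    exact Finset.sum_congr rfl fun i _ => intervalIntegral.integral_const_mul _ _
  have h2 : ∀ x₁ : ℝ, (∫ x₂ in (-1:ℝ)..1,
        ∑ i ∈ Finset.range n, g i x₁ * h i x₂ * (∫ x in (-1:ℝ)..1, l i x))
      = ∑ i ∈ Finset.range n, g i x₁ * (∫ x in (-1:ℝ)..1, h i x) * (∫ x in (-1:ℝ)..1, l i x) := by
    intro x₁
    rw [intervalIntegral.integral_finset_sum (f := fun i x₂ => g i x₁ * h i x₂ * ∫ x in (-1:ℝ)..1, l i x) (fun i _ =>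
      ((continuous_const.mul (hh i)).mul continuous_const).intervalIntegrable _ _)]
    refine Finset.sum_congr rfl fun i _ => ?_
    rw [intervalIntegral.integral_mul_const, intervalIntegral.integral_const_mul]
  simp only [h3, h2]
  rw [intervalIntegral.integral_finset_sum (f := fun i x₁ => g i x₁ * (∫ x in (-1:ℝ)..1, h i x) * ∫ x in (-1:ℝ)..1, l i x) (fun i _ =>
    (((hg i).mul continuous_const).mul continuous_const).intervalIntegrable _ _)]
  refine Finset.sum_congr rfl fun i _ => ?_
  rw [intervalIntegral.integral_mul_const, intervalIntegral.integral_mul_const]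

/-- The integral `I_m(p,q,k) = ∫_{[-1,1]³} T_{p,m}^q(x₁,x₂,x₃) φ^{k₁}(x₁) φ^{k₂}(x₂) φ^{k₃}(x₃) dx`. -/
noncomputable def solidI (φ : ℕ → Polynomial ℝ) (p m : ℕ) (q : ℤ) (k₁ k₂ k₃ : ℕ) : ℂ :=
  ∫ x₁ in (-1:ℝ)..1, ∫ x₂ in (-1:ℝ)..1, ∫ x₃ in (-1:ℝ)..1,
    solidT p m q x₁ x₂ x₃ *
      (((φ k₁).eval x₁ * (φ k₂).eval x₂ * (φ k₃).eval x₃ : ℝ) : ℂ)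

/-- the moment condition: `I_m(p,q,k) = 0` whenever `2m < k₁+k₂+k₃-p`. -/
theorem solidI_vanishes_of_moment (φ : ℕ → Polynomial ℝ)
    (hdeg : ∀ k : ℕ, (φ k).degree = k)
    (horth : ∀ j k : ℕ, j ≠ k →
      ∫ ζ in (-1:ℝ)..1, (φ j).eval ζ * (φ k).eval ζ = 0)
    (p m : ℕ) (q : ℤ) (hq : q.natAbs ≤ p) (k₁ k₂ k₃ : ℕ)
    (hm : (2 * m : ℤ) < (k₁ : ℤ) + k₂ + k₃ - p) :
    solidI φ p m q k₁ k₂ k₃ = 0 := by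
  have hk : 2 * m + p < k₁ + k₂ + k₃ := by omega
  obtain ⟨n, A, B, C, c, hb, hf⟩ := rep_solidT p m q hq
  beta_reduce at hf
  have hmono : ∀ (j e : ℕ), e < j →
      (∫ x in (-1:ℝ)..1, (x:ℂ) ^ e * ((Polynomial.eval x (φ j) : ℝ) : ℂ)) = 0 := by
    intro j e he
    calc (∫ x in (-1:ℝ)..1, (x:ℂ) ^ e * ((Polynomial.eval x (φ j) : ℝ) : ℂ))
        = ∫ x in (-1:ℝ)..1, ((x ^ e * Polynomial.eval x (φ j) : ℝ) : ℂ) := by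
          simp only [Complex.ofReal_mul, Complex.ofReal_pow]
      _ = ((∫ x in (-1:ℝ)..1, x ^ e * Polynomial.eval x (φ j) : ℝ) : ℂ) :=
          intervalIntegral.integral_ofReal
      _ = 0 := by rw [monomial_orth φ hdeg horth e j he]; norm_num
  have hrw : ∀ x₁ x₂ x₃ : ℝ, solidT p m q x₁ x₂ x₃ *
      (((φ k₁).eval x₁ * (φ k₂).eval x₂ * (φ k₃).eval x₃ : ℝ) : ℂ)
      = ∑ i ∈ Finset.range n,
          (c i * (x₁:ℂ) ^ A i * ((Polynomial.eval x₁ (φ k₁) : ℝ) : ℂ)) *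
          ((x₂:ℂ) ^ B i * ((Polynomial.eval x₂ (φ k₂) : ℝ) : ℂ)) *
          ((x₃:ℂ) ^ C i * ((Polynomial.eval x₃ (φ k₃) : ℝ) : ℂ)) := by
    intro x₁ x₂ x₃
    rw [hf, Finset.sum_mul]
    refine Finset.sum_congr rfl fun i _ => ?_
    push_cast
    ring
  unfold solidI
  simp only [hrw]
  rw [triple_int n
    (fun i x => c i * (x:ℂ) ^ A i * ((Polynomial.eval x (φ k₁) : ℝ) : ℂ))
    (fun i x => (x:ℂ) ^ B i * ((Polynomial.eval x (φ k₂) : ℝ) : ℂ))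
    (fun i x => (x:ℂ) ^ C i * ((Polynomial.eval x (φ k₃) : ℝ) : ℂ))
    (fun i => (continuous_const.mul (Complex.continuous_ofReal.pow _)).mul
      (Complex.continuous_ofReal.comp (Polynomial.continuous _)))
    (fun i => (Complex.continuous_ofReal.pow _).mul
      (Complex.continuous_ofReal.comp (Polynomial.continuous _)))
    (fun i => (Complex.continuous_ofReal.pow _).mul
      (Complex.continuous_ofReal.comp (Polynomial.continuous _)))]
  refine Finset.sum_eq_zero fun i hi => ?_
  have hABC := hb i (Finset.mem_range.mp hi)
  have hcase : A i < k₁ ∨ B i < k₂ ∨ C i < k₃ := by omega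
  rcases hcase with h | h | h
  · have hz : (∫ x in (-1:ℝ)..1, c i * (x:ℂ) ^ A i * ((Polynomial.eval x (φ k₁) : ℝ) : ℂ)) = 0 := by
      simp only [mul_assoc]
      rw [intervalIntegral.integral_const_mul]
      rw [hmono k₁ (A i) h, mul_zero]
    rw [hz, zero_mul, zero_mul]
  · rw [hmono k₂ (B i) h, mul_zero, zero_mul]
  · rw [hmono k₃ (C i) h, mul_zero]
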